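/- (Efron–Stein inequality) Let X₁, …, X_n be independent random variables and let F = F(X₁, …, X_n) be a square-integrable measurable function of them. Then Var[F] ≤ Σ_{i=1}^n E[ Var[F | (X_j)_{j ≠ i}] ]. -/

import Mathlib

open MeasureTheory ProbabilityTheory
open scoped Classical

section EfronStein

variable {ι : Type*} [Fintype ι] {α : ι → Type*} [∀ i, MeasurableSpace (α i)]

/-- Averaging operator: integrate out the coordinates outside `S`. -/
noncomputable def ESavg (ν : ∀ i, Measure (α i)) (S : Set ι) (f : (∀ i, α i) → ℝ) :
    (∀ i, α i) → ℝ :=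
  fun ω => ∫ y, f (S.piecewise ω y) ∂(Measure.pi ν)

set_option linter.unusedSectionVars false in
lemma measurable_merge (S : Set ι) :
    Measurable (fun p : (∀ i, α i) × (∀ i, α i) => S.piecewise p.1 p.2) := by
  apply measurable_pi_lambda
  intro j
  by_cases hj : j ∈ S
  · simp [Set.piecewise, hj]; exact (measurable_pi_apply j).comp measurable_fst
  · simp [Set.piecewise, hj]; exact (measurable_pi_apply j).comp measurable_snd

variable (ν : ∀ i, Measure (α i)) [∀ i, IsProbabilityMeasure (ν i)]

lemma mp_merge (S : Set ι) :
    MeasurePreserving (fun p : (∀ i, α i) × (∀ i, α i) => S.piecewise p.1 p.2)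
      ((Measure.pi ν).prod (Measure.pi ν)) (Measure.pi ν) := by
  have hφ := measurePreserving_piEquivPiSubtypeProd (α := α) ν (· ∈ S)
  have h1 : MeasurePreserving (fun ω : ∀ i, α i => (fun j : {x // x ∈ S} => ω j))
      (Measure.pi ν) (Measure.pi fun j : {x // x ∈ S} => ν j) := by
    have hfst : MeasurePreserving (Prod.fst)
        ((Measure.pi fun j : {x // x ∈ S} => ν j).prod
          (Measure.pi fun j : {x // ¬ x ∈ S} => ν j))
        (Measure.pi fun j : {x // x ∈ S} => ν j) :=
      ⟨measurable_fst, by simp [Measure.map_fst_prod]⟩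
    exact hfst.comp hφ
  have h2 : MeasurePreserving (fun ω : ∀ i, α i => (fun j : {x // ¬ x ∈ S} => ω j))
      (Measure.pi ν) (Measure.pi fun j : {x // ¬ x ∈ S} => ν j) := by
    have hsnd : MeasurePreserving (Prod.snd)
        ((Measure.pi fun j : {x // x ∈ S} => ν j).prod
          (Measure.pi fun j : {x // ¬ x ∈ S} => ν j))
        (Measure.pi fun j : {x // ¬ x ∈ S} => ν j) :=
      ⟨measurable_snd, by simp [Measure.map_snd_prod]⟩
    exact hsnd.comp hφ
  have hsymm : MeasurePreserving (MeasurableEquiv.piEquivPiSubtypeProd α (· ∈ S)).symm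
      ((Measure.pi fun j : {x // x ∈ S} => ν j).prod
        (Measure.pi fun j : {x // ¬ x ∈ S} => ν j)) (Measure.pi ν) :=
    hφ.symm _
  have key : (fun p : (∀ i, α i) × (∀ i, α i) => S.piecewise p.1 p.2) =
      (MeasurableEquiv.piEquivPiSubtypeProd α (· ∈ S)).symm ∘
        (Prod.map (fun ω : ∀ i, α i => (fun j : {x // x ∈ S} => ω j))
          (fun ω : ∀ i, α i => (fun j : {x // ¬ x ∈ S} => ω j))) := by
    funext p
    ext j
    by_cases hj : j ∈ S <;>
      simp [MeasurableEquiv.piEquivPiSubtypeProd, Equiv.piEquivPiSubtypeProd,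
        Set.piecewise, hj]
  rw [key]
  exact hsymm.comp (h1.prod h2)

lemma integral_merge (S : Set ι) {f : (∀ i, α i) → ℝ}
    (hf : AEStronglyMeasurable f (Measure.pi ν)) :
    ∫ p, f (S.piecewise p.1 p.2) ∂((Measure.pi ν).prod (Measure.pi ν))
      = ∫ ω, f ω ∂(Measure.pi ν) := by
  have := (mp_merge ν S).map_eq
  conv_rhs => rw [← this]
  rw [← this] at hf
  exact (integral_map (measurable_merge S).aemeasurable hf).symm

lemma integrable_merge (S : Set ι) {f : (∀ i, α i) → ℝ}
    (hf : Integrable f (Measure.pi ν)) :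
    Integrable (fun p : (∀ i, α i) × (∀ i, α i) => f (S.piecewise p.1 p.2))
      ((Measure.pi ν).prod (Measure.pi ν)) :=
  ((mp_merge ν S).integrable_comp hf.aestronglyMeasurable).mpr hf

end EfronStein

section More
variable {ι : Type*} [Fintype ι] {α : ι → Type*} [∀ i, MeasurableSpace (α i)]
variable (ν : ∀ i, Measure (α i)) [∀ i, IsProbabilityMeasure (ν i)]

/-- The σ-algebra generated by the coordinates in `S`. -/
def mS (S : Set ι) : MeasurableSpace (∀ i, α i) :=
  MeasurableSpace.comap (fun (ω : ∀ i, α i) (j : S) => ω j.1) MeasurableSpace.pi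

omit [Fintype ι] in
lemma mS_le (S : Set ι) : mS (α := α) S ≤ MeasurableSpace.pi :=
  (measurable_pi_lambda _ fun j => measurable_pi_apply j.1).comap_le

set_option linter.unusedSectionVars false in
lemma ESavg_stronglyMeasurable (S : Set ι) {f : (∀ i, α i) → ℝ} (hf : Measurable f) :
    StronglyMeasurable (ESavg ν S f) :=
  StronglyMeasurable.integral_prod_right'
    (f := fun p : (∀ i, α i) × (∀ i, α i) => f (S.piecewise p.1 p.2))
    ((hf.comp (measurable_merge S)).stronglyMeasurable)

lemma ESavg_integrable (S : Set ι) {f : (∀ i, α i) → ℝ}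
    (hf : Integrable f (Measure.pi ν)) : Integrable (ESavg ν S f) (Measure.pi ν) :=
  (integrable_merge ν S hf).integral_prod_left

lemma integral_ESavg (S : Set ι) {f : (∀ i, α i) → ℝ}
    (hf : Integrable f (Measure.pi ν)) :
    ∫ ω, ESavg ν S f ω ∂(Measure.pi ν) = ∫ ω, f ω ∂(Measure.pi ν) := by
  rw [show ∫ ω, ESavg ν S f ω ∂(Measure.pi ν)
      = ∫ p, f (S.piecewise p.1 p.2) ∂((Measure.pi ν).prod (Measure.pi ν)) from
    (integral_prod _ (integrable_merge ν S hf)).symm]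
  exact integral_merge ν S hf.aestronglyMeasurable

lemma ESavg_univ (f : (∀ i, α i) → ℝ) : ESavg ν Set.univ f = f := by
  funext ω
  simp [ESavg, Set.piecewise_univ]

lemma ESavg_empty (f : (∀ i, α i) → ℝ) :
    ESavg ν ∅ f = fun _ => ∫ ω, f ω ∂(Measure.pi ν) := by
  funext ω
  simp [ESavg]

set_option linter.unusedSectionVars false in
lemma ESavg_measurable_comap (S : Set ι) {f : (∀ i, α i) → ℝ} (hf : Measurable f) :
    Measurable[mS (α := α) S] (ESavg ν S f) := by
  have hcomb : Measurable fun p : (∀ j : S, α j) × (∀ i, α i) =>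
      (fun j => if h : j ∈ S then p.1 ⟨j, h⟩ else p.2 j : ∀ i, α i) := by
    apply measurable_pi_lambda
    intro j
    by_cases hj : j ∈ S
    · simp only [dif_pos hj]
      exact (measurable_pi_apply _).comp measurable_fst
    · simp only [dif_neg hj]
      exact (measurable_pi_apply _).comp measurable_snd
  have hq : Measurable fun x : ∀ j : S, α j =>
      ∫ y, f (fun j => if h : j ∈ S then x ⟨j, h⟩ else y j) ∂(Measure.pi ν) :=
    (StronglyMeasurable.integral_prod_right'
      ((hf.comp hcomb).stronglyMeasurable)).measurable
  have hr : Measurable[mS (α := α) S] (fun (ω : ∀ i, α i) (j : S) => ω j.1) :=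
    Measurable.of_comap_le le_rfl
  have heq : ESavg ν S f = (fun x : ∀ j : S, α j =>
      ∫ y, f (fun j => if h : j ∈ S then x ⟨j, h⟩ else y j) ∂(Measure.pi ν)) ∘
      (fun (ω : ∀ i, α i) (j : S) => ω j.1) := by
    funext ω
    simp only [ESavg, Function.comp_apply]
    have hpt : ∀ y : ∀ i, α i, S.piecewise ω y
        = fun j => if h : j ∈ S then ω j else y j := by
      intro y
      funext j
      by_cases hj : j ∈ S <;> simp [Set.piecewise, hj]
    simp only [hpt]
  rw [heq]
  exact hq.comp hr

end More

section More2

lemma sq_integral_le_integral_sq {Ω : Type*} [MeasurableSpace Ω] {μ : Measure Ω}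
    [IsProbabilityMeasure μ] {g : Ω → ℝ} (hg : MemLp g 2 μ) :
    (∫ x, g x ∂μ) ^ 2 ≤ ∫ x, g x ^ 2 ∂μ := by
  have h := variance_nonneg g μ
  rw [variance_eq_sub hg] at h
  have : ∫ x, (g ^ 2) x ∂μ = ∫ x, g x ^ 2 ∂μ := by simp
  linarith [h, this]

lemma memℒp2_mul_integrable {Ω : Type*} [MeasurableSpace Ω] {μ : Measure Ω}
    {f g : Ω → ℝ} (hf : MemLp f 2 μ) (hg : MemLp g 2 μ) :
    Integrable (fun x => f x * g x) μ := by
  have h1 := (hf.add hg).integrable_sq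
  have h2 := hf.integrable_sq
  have h3 := hg.integrable_sq
  have : (fun x => f x * g x)
      = fun x => (((f x + g x) ^ 2 - f x ^ 2) - g x ^ 2) / 2 := by
    funext x; ring
  rw [this]
  exact (((h1.sub h2).sub h3).div_const 2)

variable {ι : Type*} [Fintype ι] {α : ι → Type*} [∀ i, MeasurableSpace (α i)]
variable (ν : ∀ i, Measure (α i)) [∀ i, IsProbabilityMeasure (ν i)]

lemma ESavg_memℒp (S : Set ι) {f : (∀ i, α i) → ℝ} (hf : Measurable f)
    (hf2 : MemLp f 2 (Measure.pi ν)) : MemLp (ESavg ν S f) 2 (Measure.pi ν) := by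
  have hfi : Integrable f (Measure.pi ν) := hf2.integrable one_le_two
  have hsq : Integrable (fun ω => f ω ^ 2) (Measure.pi ν) := hf2.integrable_sq
  have sm := ESavg_stronglyMeasurable ν S hf
  have hbound : ∀ᵐ ω ∂(Measure.pi ν),
      ‖ESavg ν S f ω ^ 2‖ ≤ ESavg ν S (fun ω' => f ω' ^ 2) ω := by
    filter_upwards [(integrable_merge ν S hfi).prod_right_ae,
      (integrable_merge ν S hsq).prod_right_ae] with ω h1 h2
    have hslice : MemLp (fun y => f (S.piecewise ω y)) 2 (Measure.pi ν) := by
      refine (memLp_two_iff_integrable_sq ?_).2 h2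
      exact (hf.comp ((measurable_merge S).comp
        (measurable_const.prodMk measurable_id))).aestronglyMeasurable
    have := sq_integral_le_integral_sq hslice
    have hnn : ‖ESavg ν S f ω ^ 2‖ = (∫ y, f (S.piecewise ω y) ∂(Measure.pi ν)) ^ 2 := by
      rw [Real.norm_eq_abs, abs_of_nonneg (sq_nonneg _)]
      rfl
    rw [hnn]
    exact this
  have hinteg : Integrable (fun ω => ESavg ν S f ω ^ 2) (Measure.pi ν) := by
    refine Integrable.mono' (ESavg_integrable ν S hsq)
      ((sm.measurable.pow_const 2).aestronglyMeasurable) hbound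
  exact (memLp_two_iff_integrable_sq sm.aestronglyMeasurable).2 hinteg

omit [Fintype ι] in
lemma piecewise_piecewise {S T U : Set ι} (hU : U = S ∩ T) (ω y z : ∀ i, α i) :
    T.piecewise (S.piecewise ω y) z = U.piecewise ω (T.piecewise y z) := by
  funext j
  by_cases hT : j ∈ T <;> by_cases hS : j ∈ S <;>
    simp [Set.piecewise, hT, hS, hU, Set.mem_inter_iff]

lemma ESavg_comp {S T U : Set ι} (hU : U = S ∩ T) {f : (∀ i, α i) → ℝ}
    (hf : Measurable f)
    (hfi : Integrable f (Measure.pi ν)) :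
    ESavg ν S (ESavg ν T f) =ᵐ[Measure.pi ν] ESavg ν U f := by
  filter_upwards [(integrable_merge ν U hfi).prod_right_ae] with ω hω
  have hG : Integrable (fun w => f (U.piecewise ω w)) (Measure.pi ν) := hω
  calc ESavg ν S (ESavg ν T f) ω
      = ∫ y, ∫ z, f (U.piecewise ω (T.piecewise y z)) ∂(Measure.pi ν)
          ∂(Measure.pi ν) := by
        simp only [ESavg, piecewise_piecewise hU]
    _ = ∫ p, (fun w => f (U.piecewise ω w)) (T.piecewise p.1 p.2)
          ∂((Measure.pi ν).prod (Measure.pi ν)) :=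
        (integral_prod _ (integrable_merge ν T hG)).symm
    _ = ∫ w, f (U.piecewise ω w) ∂(Measure.pi ν) :=
        integral_merge ν T hG.aestronglyMeasurable
    _ = ESavg ν U f ω := rfl

end More2

section Condexp
variable {ι : Type*} [Fintype ι] {α : ι → Type*} [∀ i, MeasurableSpace (α i)]
variable (ν : ∀ i, Measure (α i)) [∀ i, IsProbabilityMeasure (ν i)]

lemma ESavg_eq_condexp (S : Set ι) {f : (∀ i, α i) → ℝ} (hf : Measurable f)
    (hfi : Integrable f (Measure.pi ν)) :
    ESavg ν S f =ᵐ[Measure.pi ν] (Measure.pi ν)[f | mS (α := α) S] := by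
  have hm := mS_le (α := α) S
  refine ae_eq_condExp_of_forall_setIntegral_eq hm hfi ?_ ?_ ?_
  · intro s _ _
    exact (ESavg_integrable ν S hfi).integrableOn
  · intro s hs _
    obtain ⟨t, ht, rfl⟩ := MeasurableSpace.measurableSet_comap.mp hs
    set r := fun (ω : ∀ i, α i) (j : S) => ω j.1 with hr
    have has : MeasurableSet (r ⁻¹' t) := hm _ hs
    have hind : Integrable ((r ⁻¹' t).indicator f) (Measure.pi ν) := hfi.indicator has
    have key : ∀ ω, ∫ y, ((r ⁻¹' t).indicator f) (S.piecewise ω y) ∂(Measure.pi ν)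
        = (r ⁻¹' t).indicator (ESavg ν S f) ω := by
      intro ω
      have hmem : ∀ y : ∀ i, α i, S.piecewise ω y ∈ r ⁻¹' t ↔ ω ∈ r ⁻¹' t := by
        intro y
        have : r (S.piecewise ω y) = r ω := by
          funext j
          exact Set.piecewise_eq_of_mem _ _ _ j.2
        simp [Set.mem_preimage, this]
      by_cases hω : ω ∈ r ⁻¹' t
      · have : ∀ y, ((r ⁻¹' t).indicator f) (S.piecewise ω y) = f (S.piecewise ω y) := by
          intro y
          exact Set.indicator_of_mem ((hmem y).mpr hω) f
        simp only [this, Set.indicator_of_mem hω]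
        rfl
      · have : ∀ y, ((r ⁻¹' t).indicator f) (S.piecewise ω y) = 0 := by
          intro y
          exact Set.indicator_of_notMem (fun h => hω ((hmem y).mp h)) f
        simp [this, Set.indicator_of_notMem hω]
    calc ∫ x in r ⁻¹' t, ESavg ν S f x ∂(Measure.pi ν)
        = ∫ x, (r ⁻¹' t).indicator (ESavg ν S f) x ∂(Measure.pi ν) :=
          (integral_indicator has).symm
      _ = ∫ ω, ∫ y, ((r ⁻¹' t).indicator f) (S.piecewise ω y) ∂(Measure.pi ν)
            ∂(Measure.pi ν) := by
          refine integral_congr_ae (Filter.Eventually.of_forall fun ω => ?_)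
          exact (key ω).symm
      _ = ∫ p, ((r ⁻¹' t).indicator f) (S.piecewise p.1 p.2)
            ∂((Measure.pi ν).prod (Measure.pi ν)) :=
          (integral_prod _ (integrable_merge ν S hind)).symm
      _ = ∫ x, ((r ⁻¹' t).indicator f) x ∂(Measure.pi ν) :=
          integral_merge ν S hind.aestronglyMeasurable
      _ = ∫ x in r ⁻¹' t, f x ∂(Measure.pi ν) := integral_indicator has
  · exact ⟨ESavg ν S f, (ESavg_measurable_comap ν S hf).stronglyMeasurable,
      Filter.EventuallyEq.refl _ _⟩

end Condexp

section Contraction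

lemma integral_condExp_sq_le {Ω : Type*} {m m0 : MeasurableSpace Ω} {μ : Measure Ω}
    (hm : m ≤ m0) [IsProbabilityMeasure μ] {h : Ω → ℝ} (hh : MemLp h 2 μ)
    (hg2 : MemLp (μ[h|m]) 2 μ) :
    ∫ x, (μ[h|m]) x ^ 2 ∂μ ≤ ∫ x, h x ^ 2 ∂μ := by
  set g := μ[h|m] with hgdef
  have hhi : Integrable h μ := hh.integrable one_le_two
  have hgh : Integrable (fun x => g x * h x) μ := memℒp2_mul_integrable hg2 hh
  have hgg : Integrable (fun x => g x * g x) μ := memℒp2_mul_integrable hg2 hg2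
  have hpull : μ[(fun x => g x * h x)|m] =ᵐ[μ] fun x => g x * g x := by
    have := condExp_mul_of_stronglyMeasurable_left (μ := μ) (m := m)
      (stronglyMeasurable_condExp (f := h)) (by exact hgh) hhi
    filter_upwards [this] with x hx
    exact hx
  have key : ∫ x, g x * h x ∂μ = ∫ x, g x * g x ∂μ := by
    rw [← integral_condExp hm (f := fun x => g x * h x)]
    exact integral_congr_ae hpull
  have hh2 : Integrable (fun x => h x ^ 2) μ := hh.integrable_sq
  have hg2' : Integrable (fun x => g x ^ 2) μ := hg2.integrable_sq
  have hexp : ∫ x, (h x - g x) ^ 2 ∂μ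
      = ∫ x, h x ^ 2 ∂μ - 2 * ∫ x, g x * h x ∂μ + ∫ x, g x ^ 2 ∂μ := by
    have hptwise : (fun x => (h x - g x) ^ 2)
        = fun x => h x ^ 2 - 2 * (g x * h x) + g x ^ 2 := by
      funext x; ring
    have i1 : Integrable (fun x => h x ^ 2 - 2 * (g x * h x)) μ := by
      exact hh2.sub (hgh.const_mul 2)
    have i2 : Integrable (fun x => 2 * (g x * h x)) μ := by
      exact hgh.const_mul 2
    rw [hptwise, integral_add i1 hg2', integral_sub hh2 i2, MeasureTheory.integral_const_mul]
  have hnn : 0 ≤ ∫ x, (h x - g x) ^ 2 ∂μ :=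
    integral_nonneg fun x => sq_nonneg _
  have hgg' : ∫ x, g x * g x ∂μ = ∫ x, g x ^ 2 ∂μ := by
    refine integral_congr_ae (Filter.Eventually.of_forall fun x => ?_)
    ring
  nlinarith [hexp, hnn, key, hgg']

end Contraction

section Mono
variable {ι : Type*} [Fintype ι] {α : ι → Type*} [∀ i, MeasurableSpace (α i)]

omit [Fintype ι] in
lemma mS_mono {S T : Set ι} (hST : S ⊆ T) : mS (α := α) S ≤ mS (α := α) T := by
  intro s hs
  obtain ⟨t, ht, rfl⟩ := MeasurableSpace.measurableSet_comap.mp hs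
  refine MeasurableSpace.measurableSet_comap.mpr
    ⟨(fun (x : ∀ j : T, α j) (j : S) => x ⟨j.1, hST j.2⟩) ⁻¹' t, ?_, rfl⟩
  exact (measurable_pi_lambda _ fun j => measurable_pi_apply _) ht

end Mono

theorem stmt17 {ι : Type*} [Fintype ι] {α : ι → Type*} [∀ i, MeasurableSpace (α i)]
    (ν : ∀ i, Measure (α i)) [∀ i, IsProbabilityMeasure (ν i)]
    (F : (∀ i, α i) → ℝ) (hF : Measurable F) (hF2 : MemLp F 2 (Measure.pi ν)) :
    variance F (Measure.pi ν) ≤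
      ∑ i : ι, ∫ ω,
        (F ω - ((Measure.pi ν)[F |
          MeasurableSpace.comap
            (fun (ω' : ∀ j, α j) (j : {j : ι // j ≠ i}) => ω' j.1)
            MeasurableSpace.pi]) ω) ^ 2 ∂(Measure.pi ν) := by
  classical
  have hfi : Integrable F (Measure.pi ν) := hF2.integrable one_le_two
  set n := Fintype.card ι with hn
  set e : Fin n ≃ ι := (Fintype.equivFin ι).symm with he
  set Sk : ℕ → Set ι := fun k => {j | (e.symm j : ℕ) < k} with hSkdef
  set g : ℕ → (∀ i, α i) → ℝ := fun k => ESavg ν (Sk k) F with hgdef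
  set Δ : ℕ → (∀ i, α i) → ℝ := fun k ω => g (k + 1) ω - g k ω with hΔdef
  have hgm : ∀ k, Measurable (g k) := fun k =>
    (ESavg_stronglyMeasurable ν (Sk k) hF).measurable
  have hgi : ∀ k, Integrable (g k) (Measure.pi ν) := fun k =>
    ESavg_integrable ν (Sk k) hfi
  have hgmem : ∀ k, MemLp (g k) 2 (Measure.pi ν) := fun k =>
    ESavg_memℒp ν (Sk k) hF hF2
  have hΔmem : ∀ k, MemLp (Δ k) 2 (Measure.pi ν) := fun k => by
    exact (hgmem (k + 1)).sub (hgmem k)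
  have hΔi : ∀ k, Integrable (Δ k) (Measure.pi ν) := fun k =>
    (hΔmem k).integrable one_le_two
  have hSsub : ∀ {k l : ℕ}, k ≤ l → Sk k ⊆ Sk l := by
    intro k l hkl j hj
    exact lt_of_lt_of_le hj hkl
  have hS0 : Sk 0 = ∅ := by ext j; simp [hSkdef]
  have hSn : Sk n = Set.univ := by
    ext j
    simpa [hSkdef] using (e.symm j).2
  -- `g k` is measurable w.r.t. the σ-algebra of the first `k` coordinates
  have hgm' : ∀ k, Measurable[mS (α := α) (Sk k)] (g k) := fun k =>
    ESavg_measurable_comap ν (Sk k) hF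
  -- condexp identification of g
  have hgce : ∀ k, g k =ᵐ[Measure.pi ν] (Measure.pi ν)[F | mS (α := α) (Sk k)] := fun k =>
    ESavg_eq_condexp ν (Sk k) hF hfi
  -- telescoping
  have htel : ∀ ω, F ω - ∫ x, F x ∂(Measure.pi ν) = ∑ k ∈ Finset.range n, Δ k ω := by
    intro ω
    have hsum : ∑ k ∈ Finset.range n, Δ k ω = g n ω - g 0 ω :=
      Finset.sum_range_sub (f := fun k => g k ω) n
    have h1 : g n ω = F ω := by rw [hgdef]; simp only [hSn, ESavg_univ]
    have h2 : g 0 ω = ∫ x, F x ∂(Measure.pi ν) := by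
      rw [hgdef]; simp only [hS0, ESavg_empty]
    rw [hsum, h1, h2]
  -- orthogonality of increments
  have horth : ∀ k l, k < l → ∫ ω, Δ k ω * Δ l ω ∂(Measure.pi ν) = 0 := by
    intro k l hkl
    have hm := mS_le (α := α) (Sk l)
    have hsmk : StronglyMeasurable[mS (α := α) (Sk l)] (Δ k) := by
      have h1 : Measurable[mS (α := α) (Sk l)] (g (k + 1)) :=
        (hgm' (k + 1)).mono (mS_mono (hSsub hkl)) le_rfl
      have h2 : Measurable[mS (α := α) (Sk l)] (g k) :=
        (hgm' k).mono (mS_mono (hSsub (le_of_lt (Nat.lt_of_succ_le hkl)))) le_rfl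
      exact (h1.sub h2).stronglyMeasurable
    have hcond0 : (Measure.pi ν)[Δ l | mS (α := α) (Sk l)] =ᵐ[Measure.pi ν] 0 := by
      have hsub := condExp_sub (μ := Measure.pi ν) (m := mS (α := α) (Sk l))
        (hgi (l + 1)) (hgi l)
      have hfix : (Measure.pi ν)[g l | mS (α := α) (Sk l)] = g l :=
        condExp_of_stronglyMeasurable hm ((hgm' l).stronglyMeasurable) (hgi l)
      have hproj : (Measure.pi ν)[g (l + 1) | mS (α := α) (Sk l)] =ᵐ[Measure.pi ν] g l := by
        have h1 : ESavg ν (Sk l) (g (l + 1)) =ᵐ[Measure.pi ν]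
            (Measure.pi ν)[g (l + 1) | mS (α := α) (Sk l)] :=
          ESavg_eq_condexp ν (Sk l) (hgm (l + 1)) (hgi (l + 1))
        have h2 : ESavg ν (Sk l) (ESavg ν (Sk (l + 1)) F) =ᵐ[Measure.pi ν]
            ESavg ν (Sk l) F :=
          ESavg_comp ν (Set.inter_eq_left.mpr (hSsub (Nat.le_succ l))).symm hF hfi
        exact (h1.symm.trans h2 : _)
      calc (Measure.pi ν)[Δ l | mS (α := α) (Sk l)]
          =ᵐ[Measure.pi ν] (Measure.pi ν)[g (l + 1) | mS (α := α) (Sk l)]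
            - (Measure.pi ν)[g l | mS (α := α) (Sk l)] := hsub
        _ =ᵐ[Measure.pi ν] 0 := by
            rw [hfix]
            filter_upwards [hproj] with ω hω
            simp [hω]
    have hint : Integrable (fun ω => Δ k ω * Δ l ω) (Measure.pi ν) :=
      memℒp2_mul_integrable (hΔmem k) (hΔmem l)
    have hpull : (Measure.pi ν)[(fun ω => Δ k ω * Δ l ω) | mS (α := α) (Sk l)]
        =ᵐ[Measure.pi ν] fun ω => Δ k ω * ((Measure.pi ν)[Δ l | mS (α := α) (Sk l)]) ω := by
      have := condExp_mul_of_stronglyMeasurable_left (μ := Measure.pi ν) hsmk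
        (by exact hint) (hΔi l)
      filter_upwards [this] with ω hω
      exact hω
    calc ∫ ω, Δ k ω * Δ l ω ∂(Measure.pi ν)
        = ∫ ω, ((Measure.pi ν)[(fun ω => Δ k ω * Δ l ω) | mS (α := α) (Sk l)]) ω
            ∂(Measure.pi ν) := (integral_condExp hm).symm
      _ = 0 := by
          rw [integral_congr_ae (hpull.trans ?_), integral_zero]
          filter_upwards [hcond0] with ω hω
          simp [hω]
  -- variance as the integral of the squared telescoping sum
  have hvar : variance F (Measure.pi ν)
      = ∫ ω, (∑ k ∈ Finset.range n, Δ k ω) ^ 2 ∂(Measure.pi ν) := by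
    rw [variance_eq_integral hF2.aemeasurable]
    refine integral_congr_ae (Filter.Eventually.of_forall fun ω => ?_)
    simp only [Pi.pow_apply, Pi.sub_apply]
    rw [htel ω]
  have hexp : ∫ ω, (∑ k ∈ Finset.range n, Δ k ω) ^ 2 ∂(Measure.pi ν)
      = ∑ k ∈ Finset.range n, ∫ ω, Δ k ω ^ 2 ∂(Measure.pi ν) := by
    have h1 : ∀ ω, (∑ k ∈ Finset.range n, Δ k ω) ^ 2
        = ∑ k ∈ Finset.range n, ∑ l ∈ Finset.range n, Δ k ω * Δ l ω := by
      intro ω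
      rw [sq, Finset.sum_mul_sum]
    calc ∫ ω, (∑ k ∈ Finset.range n, Δ k ω) ^ 2 ∂(Measure.pi ν)
        = ∫ ω, ∑ k ∈ Finset.range n, ∑ l ∈ Finset.range n, Δ k ω * Δ l ω
            ∂(Measure.pi ν) :=
          integral_congr_ae (Filter.Eventually.of_forall h1)
      _ = ∑ k ∈ Finset.range n, ∫ ω, ∑ l ∈ Finset.range n, Δ k ω * Δ l ω
            ∂(Measure.pi ν) :=
          integral_finset_sum _ fun k _ => integrable_finset_sum _ fun l _ =>
            memℒp2_mul_integrable (hΔmem k) (hΔmem l)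
      _ = ∑ k ∈ Finset.range n, ∑ l ∈ Finset.range n,
            ∫ ω, Δ k ω * Δ l ω ∂(Measure.pi ν) :=
          Finset.sum_congr rfl fun k _ => integral_finset_sum _ fun l _ =>
            memℒp2_mul_integrable (hΔmem k) (hΔmem l)
      _ = ∑ k ∈ Finset.range n, ∫ ω, Δ k ω ^ 2 ∂(Measure.pi ν) := by
          refine Finset.sum_congr rfl fun k hk => ?_
          rw [Finset.sum_eq_single_of_mem k hk]
          · refine integral_congr_ae (Filter.Eventually.of_forall fun ω => ?_)
            simp only []
            rw [sq]
          · intro l _ hlk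
            rcases lt_or_gt_of_ne hlk with h | h
            · have : ∫ ω, Δ k ω * Δ l ω ∂(Measure.pi ν)
                  = ∫ ω, Δ l ω * Δ k ω ∂(Measure.pi ν) :=
                integral_congr_ae (Filter.Eventually.of_forall fun ω => mul_comm _ _)
              rw [this]
              exact horth l k h
            · exact horth k l h
  -- the per-increment bound
  have hterm : ∀ k : Fin n, ∫ ω, Δ (k : ℕ) ω ^ 2 ∂(Measure.pi ν)
      ≤ ∫ ω, (F ω - ((Measure.pi ν)[F | mS (α := α) {j | j ≠ e k}]) ω) ^ 2
          ∂(Measure.pi ν) := by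
    intro k
    set T : Set ι := {j | j ≠ e k} with hTdef
    have hTint : Integrable (ESavg ν T F) (Measure.pi ν) := ESavg_integrable ν T hfi
    have hTm : Measurable (ESavg ν T F) := (ESavg_stronglyMeasurable ν T hF).measurable
    have hcondT : ESavg ν T F =ᵐ[Measure.pi ν] (Measure.pi ν)[F | mS (α := α) T] :=
      ESavg_eq_condexp ν T hF hfi
    have hU : Sk (k : ℕ) = Sk ((k : ℕ) + 1) ∩ T := by
      ext j
      simp only [hSkdef, Set.mem_setOf_eq, Set.mem_inter_iff, hTdef]
      constructor
      · intro hj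
        refine ⟨Nat.lt_succ_of_lt hj, fun hji => ?_⟩
        rw [hji] at hj
        simp only [Equiv.symm_apply_apply] at hj
        exact lt_irrefl _ hj
      · rintro ⟨h1, h2⟩
        have hne : e.symm j ≠ k := fun hh => h2 (by rw [← hh, Equiv.apply_symm_apply])
        have hvne : (e.symm j : ℕ) ≠ (k : ℕ) := fun hh => hne (Fin.ext hh)
        omega
    have hrep : (Measure.pi ν)[(fun ω => F ω - ESavg ν T F ω) |
        mS (α := α) (Sk ((k : ℕ) + 1))] =ᵐ[Measure.pi ν] Δ (k : ℕ) := by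
      have hsub := condExp_sub (μ := Measure.pi ν)
        (m := mS (α := α) (Sk ((k : ℕ) + 1))) hfi hTint
      have h1 : (Measure.pi ν)[F | mS (α := α) (Sk ((k : ℕ) + 1))]
          =ᵐ[Measure.pi ν] g ((k : ℕ) + 1) := (hgce ((k : ℕ) + 1)).symm
      have h2 : (Measure.pi ν)[ESavg ν T F | mS (α := α) (Sk ((k : ℕ) + 1))]
          =ᵐ[Measure.pi ν] g (k : ℕ) := by
        have ha : ESavg ν (Sk ((k : ℕ) + 1)) (ESavg ν T F) =ᵐ[Measure.pi ν]
            (Measure.pi ν)[ESavg ν T F | mS (α := α) (Sk ((k : ℕ) + 1))] :=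
          ESavg_eq_condexp ν _ hTm hTint
        have hb : ESavg ν (Sk ((k : ℕ) + 1)) (ESavg ν T F) =ᵐ[Measure.pi ν]
            ESavg ν (Sk (k : ℕ)) F := ESavg_comp ν hU hF hfi
        exact ha.symm.trans hb
      calc (Measure.pi ν)[(fun ω => F ω - ESavg ν T F ω) |
            mS (α := α) (Sk ((k : ℕ) + 1))]
          =ᵐ[Measure.pi ν] (Measure.pi ν)[F | mS (α := α) (Sk ((k : ℕ) + 1))]
            - (Measure.pi ν)[ESavg ν T F | mS (α := α) (Sk ((k : ℕ) + 1))] := hsub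
        _ =ᵐ[Measure.pi ν] Δ (k : ℕ) := by
            filter_upwards [h1, h2] with ω hω1 hω2
            simp only [Pi.sub_apply, hω1, hω2, hΔdef]
    have hmem_h : MemLp (fun ω => F ω - ESavg ν T F ω) 2 (Measure.pi ν) := by
      exact hF2.sub (ESavg_memℒp ν T hF hF2)
    have hg2 : MemLp ((Measure.pi ν)[(fun ω => F ω - ESavg ν T F ω) |
        mS (α := α) (Sk ((k : ℕ) + 1))]) 2 (Measure.pi ν) :=
      MemLp.ae_eq hrep.symm (hΔmem (k : ℕ))
    have hle := integral_condExp_sq_le (mS_le (α := α) (Sk ((k : ℕ) + 1))) hmem_h hg2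
    calc ∫ ω, Δ (k : ℕ) ω ^ 2 ∂(Measure.pi ν)
        = ∫ ω, ((Measure.pi ν)[(fun ω => F ω - ESavg ν T F ω) |
            mS (α := α) (Sk ((k : ℕ) + 1))]) ω ^ 2 ∂(Measure.pi ν) := by
          refine integral_congr_ae ?_
          filter_upwards [hrep] with ω hω
          rw [hω]
      _ ≤ ∫ ω, (F ω - ESavg ν T F ω) ^ 2 ∂(Measure.pi ν) := hle
      _ = ∫ ω, (F ω - ((Measure.pi ν)[F | mS (α := α) T]) ω) ^ 2 ∂(Measure.pi ν) := by
          refine integral_congr_ae ?_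
          filter_upwards [hcondT] with ω hω
          rw [hω]
  -- conclusion
  calc variance F (Measure.pi ν)
      = ∑ k ∈ Finset.range n, ∫ ω, Δ k ω ^ 2 ∂(Measure.pi ν) := by rw [hvar, hexp]
    _ = ∑ k : Fin n, ∫ ω, Δ (k : ℕ) ω ^ 2 ∂(Measure.pi ν) :=
        (Fin.sum_univ_eq_sum_range _ n).symm
    _ ≤ ∑ k : Fin n, ∫ ω, (F ω - ((Measure.pi ν)[F | mS (α := α) {j | j ≠ e k}]) ω) ^ 2
          ∂(Measure.pi ν) := Finset.sum_le_sum fun k _ => hterm k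
    _ = ∑ i : ι, ∫ ω,
          (F ω - ((Measure.pi ν)[F |
            MeasurableSpace.comap
              (fun (ω' : ∀ j, α j) (j : {j : ι // j ≠ i}) => ω' j.1)
              MeasurableSpace.pi]) ω) ^ 2 ∂(Measure.pi ν) :=
        Fintype.sum_equiv e _ _ fun k => rfl
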